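/- Let p ≥ 0, let φ be a nonnegative function on 𝔻 and let f be holomorphic on 𝔻, with f_s(z) := f(sz). Suppose that for every 0 ≤ s < 1, ∑_{a ∈ Z(f_s)} (1 − |a|²)^{p+1} φ(sa) ≤ ∫_𝔻 (1 − |z|²)^{p−1} φ(sz) log⁺|f(sz)| dm(z). Then for every 0 < δ < 1, ∑_{a ∈ Z(f)} (1 − |a|²)^{p+1} φ(a) ≤ sup_{1−δ<s<1} ∫_𝔻 (1 − |z|²)^{p−1} φ(sz) log⁺|f(sz)| dm(z). -/

import Mathlib

open MeasureTheory Metric Complex Set ENNReal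
open scoped Classical

noncomputable section

/-- positive part of the logarithm: `log⁺ t = max (log t) 0`. -/
def logPlus (t : ℝ) : ℝ := max (Real.log t) 0

/-- negative part of the logarithm: `log⁻ t = max (-log t) 0`. -/
def logMinus (t : ℝ) : ℝ := max (-Real.log t) 0

/-- `|R(z)| = ∏ j |z - η j| ^ (q j)`. -/
def Rabs {n : ℕ} (η : Fin n → ℂ) (q : Fin n → ℝ) (z : ℂ) : ℝ :=
  ∏ j, ‖z - η j‖ ^ q j

/-- Laplacian of a real valued function on `ℂ`:
`Δg(z) = ∂²g/∂x²(z) + ∂²g/∂y²(z)`. -/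
def lap (g : ℂ → ℝ) (z : ℂ) : ℝ :=
  iteratedDeriv 2 (fun t : ℝ => g (z + (t : ℂ))) 0 +
  iteratedDeriv 2 (fun t : ℝ => g (z + (t : ℂ) * Complex.I)) 0

/-- the order of vanishing of `f` at `a` (0 if `f` is not analytic at `a`). -/
def zeroOrder (f : ℂ → ℂ) (a : ℂ) : ℕ :=
  if h : AnalyticAt ℂ f a then (analyticOrderAt f a).toNat else 0

/-- the sum, over the zeros `a` of `f` in the unit disc counted with multiplicity,
of the weight `w a`, computed in `ℝ≥0∞`. -/
def zeroSum (f : ℂ → ℂ) (w : ℂ → ℝ) : ℝ≥0∞ :=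
  ∑' a : (ball (0 : ℂ) 1 : Set ℂ), (zeroOrder f a : ℝ≥0∞) * ENNReal.ofReal (w a)

/-- `M(ρ) = sup_θ |R(ρ e^{iθ})|²`. -/
def Msup {n : ℕ} (η : Fin n → ℂ) (q : Fin n → ℝ) (ρ : ℝ) : ℝ :=
  ⨆ θ : ℝ, (Rabs η q ((ρ : ℂ) * Complex.exp ((θ : ℂ) * Complex.I))) ^ 2

/-- `m(ρ) = inf_θ |R(ρ e^{iθ})|²`. -/
def minf {n : ℕ} (η : Fin n → ℂ) (q : Fin n → ℝ) (ρ : ℝ) : ℝ :=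
  ⨅ θ : ℝ, (Rabs η q ((ρ : ℂ) * Complex.exp ((θ : ℂ) * Complex.I))) ^ 2

/-- `c(δ,u) = sup_{0≤s<1} sup_{0≤ρ<u} (M(sρ)/m(sρ)) (1-ρ²)^δ`. -/
def cconst {n : ℕ} (η : Fin n → ℂ) (q : Fin n → ℝ) (δ u : ℝ) : ℝ :=
  ⨆ s : (Ico (0:ℝ) 1 : Set ℝ), ⨆ ρ : (Ico (0:ℝ) u : Set ℝ),
    (Msup η q ((s : ℝ) * (ρ : ℝ)) / minf η q ((s : ℝ) * (ρ : ℝ))) * (1 - (ρ : ℝ) ^ 2) ^ δ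

lemma zeroOrder_scale' (f : ℂ → ℂ) (c a : ℂ) (hc : c ≠ 0) (hf : AnalyticAt ℂ f (c * a)) :
    zeroOrder (fun z => f (c * z)) a = zeroOrder f (c * a) := by
  have hlin : AnalyticAt ℂ (fun z : ℂ => c * z) a := analyticAt_const.mul analyticAt_id
  have hg : AnalyticAt ℂ (fun z => f (c * z)) a := hf.comp hlin
  have hmap : Filter.Tendsto (fun z : ℂ => c * z) (nhds a) (nhds (c * a)) :=
    ((continuous_const.mul continuous_id).tendsto a)
  have hord : analyticOrderAt (fun z => f (c * z)) a = analyticOrderAt f (c * a) := by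
    by_cases ho : analyticOrderAt f (c * a) = ⊤
    · rw [ho]
      rw [analyticOrderAt_eq_top] at ho ⊢
      exact hmap.eventually ho
    · have hn' : analyticOrderAt f (c * a) = ((analyticOrderAt f (c * a)).toNat : ℕ∞) := (ENat.coe_toNat ho).symm
      set n := (analyticOrderAt f (c * a)).toNat with hndef
      rw [hn']
      obtain ⟨g, hg_an, hg_ne, hg_eq⟩ := (hf.analyticOrderAt_eq_natCast (n := n)).mp hn'
      refine (hg.analyticOrderAt_eq_natCast (n := n)).mpr
        ⟨fun z => c ^ n * g (c * z), analyticAt_const.mul (hg_an.comp hlin), ?_, ?_⟩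
      · exact mul_ne_zero (pow_ne_zero n hc) hg_ne
      · filter_upwards [hmap.eventually hg_eq] with z hz
        simp only [smul_eq_mul] at hz ⊢
        rw [hz]
        have : c * z - c * a = c * (z - a) := by ring
        rw [this, mul_pow]
        ring
  unfold zeroOrder
  rw [dif_pos hg, dif_pos hf, hord]

theorem stmt_18 (p : ℝ) (hp : 0 ≤ p)
    (φ : ℂ → ℝ) (hφ : ∀ z ∈ ball (0 : ℂ) 1, 0 ≤ φ z)
    (f : ℂ → ℂ) (hf : DifferentiableOn ℂ f (ball 0 1))
    (H : ∀ s : ℝ, 0 ≤ s → s < 1 →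
      zeroSum (fun z => f ((s : ℂ) * z))
          (fun a => (1 - ‖a‖ ^ 2) ^ (p + 1) * φ ((s : ℂ) * a))
        ≤ ∫⁻ z in ball (0 : ℂ) 1,
            ENNReal.ofReal ((1 - ‖z‖ ^ 2) ^ (p - 1) * φ ((s : ℂ) * z) *
              logPlus (‖(f ((s : ℂ) * z))‖)))
    (δ : ℝ) (hδ0 : 0 < δ) (hδ1 : δ < 1) :
    zeroSum f (fun a => (1 - ‖a‖ ^ 2) ^ (p + 1) * φ a)
      ≤ ⨆ s : (Ioo (1 - δ) 1 : Set ℝ), ∫⁻ z in ball (0 : ℂ) 1,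
          ENNReal.ofReal ((1 - ‖z‖ ^ 2) ^ (p - 1) * φ (((s : ℝ) : ℂ) * z) *
            logPlus (‖(f (((s : ℝ) : ℂ) * z))‖)) := by
  rw [zeroSum, ENNReal.tsum_eq_iSup_sum]
  refine iSup_le fun F => ?_
  rcases F.eq_empty_or_nonempty with rfl | hFne
  · simp
  have habs : ∀ a : (ball (0:ℂ) 1 : Set ℂ), ‖(a : ℂ)‖ < 1 := fun a => by
    simpa using mem_ball_zero_iff.mp a.2
  set r : ℝ := F.sup' hFne (fun a => ‖(a : ℂ)‖) with hrdef
  have hr1 : r < 1 := by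
    rw [hrdef, Finset.sup'_lt_iff]
    exact fun a _ => habs a
  have hra : ∀ a ∈ F, ‖(a : ℂ)‖ ≤ r := by
    intro a ha
    rw [hrdef]
    exact Finset.le_sup' (fun b : (ball (0:ℂ) 1 : Set ℂ) => ‖(b : ℂ)‖) ha
  set s₀ : ℝ := max (1 - δ) r with hs₀def
  have hs₀1 : s₀ < 1 := max_lt (by linarith) hr1
  have hs₀pos : 0 < s₀ := lt_of_lt_of_le (by linarith) (le_max_left _ _)
  -- the s-dependent terms
  set T : ℝ → (ball (0:ℂ) 1 : Set ℂ) → ℝ≥0∞ := fun s a =>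
    (zeroOrder f (a : ℂ) : ℝ≥0∞) *
      ENNReal.ofReal ((1 - (‖(a : ℂ)‖ / s) ^ 2) ^ (p + 1) * φ (a : ℂ)) with hTdef
  have key : ∀ s : ℝ, s ∈ Ioo s₀ 1 → (∑ a ∈ F, T s a) ≤
      ⨆ s : (Ioo (1 - δ) 1 : Set ℝ), ∫⁻ z in ball (0 : ℂ) 1,
          ENNReal.ofReal ((1 - ‖z‖ ^ 2) ^ (p - 1) * φ (((s : ℝ) : ℂ) * z) *
            logPlus (‖(f (((s : ℝ) : ℂ) * z))‖)) := by
    intro s hs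
    have hs0 : 0 < s := lt_trans hs₀pos hs.1
    have hsC : (s : ℂ) ≠ 0 := by
      simpa using hs0.ne'
    have habsdiv : ∀ a : ℂ, ‖(a / (s : ℂ))‖ = ‖a‖ / s := by
      intro a
      rw [norm_div, Complex.norm_real, Real.norm_eq_abs, abs_of_pos hs0]
    have hmem : ∀ a ∈ F, ((a : ℂ) : ℂ) / (s : ℂ) ∈ ball (0:ℂ) 1 := by
      intro a ha
      rw [mem_ball_zero_iff, habsdiv, div_lt_one hs0]
      exact lt_of_le_of_lt (hra a ha) (lt_of_le_of_lt (le_max_right (1 - δ) r) hs.1)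
    set g : (ball (0:ℂ) 1 : Set ℂ) → ℝ≥0∞ := fun b =>
      (zeroOrder (fun z => f ((s : ℂ) * z)) (b : ℂ) : ℝ≥0∞) *
        ENNReal.ofReal ((1 - ‖(b : ℂ)‖ ^ 2) ^ (p + 1) * φ ((s : ℂ) * (b : ℂ)))
      with hgdef
    set j : {x // x ∈ F} → (ball (0:ℂ) 1 : Set ℂ) := fun x =>
      ⟨((x : (ball (0:ℂ) 1 : Set ℂ)) : ℂ) / (s : ℂ), hmem x.1 x.2⟩ with hjdef
    have hj : Function.Injective j := by
      intro x y hxy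
      have : ((x.1 : ℂ)) / (s : ℂ) = ((y.1 : ℂ)) / (s : ℂ) := congrArg Subtype.val hxy
      have h2 : (x.1 : ℂ) = (y.1 : ℂ) := by
        field_simp at this
        exact this
      exact Subtype.ext (Subtype.ext h2)
    have hTg : ∀ x : {x // x ∈ F}, T s x.1 = g (j x) := by
      intro x
      have hxa : (s : ℂ) * (((x.1 : (ball (0:ℂ) 1 : Set ℂ)) : ℂ) / (s : ℂ)) = (x.1 : ℂ) :=
        mul_div_cancel₀ _ hsC
      have hfan : AnalyticAt ℂ f ((s : ℂ) * (((x.1 : (ball (0:ℂ) 1 : Set ℂ)) : ℂ) / (s : ℂ))) := by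
        rw [hxa]
        exact hf.analyticAt (isOpen_ball.mem_nhds x.1.2)
      have hord := zeroOrder_scale' f (s : ℂ) (((x.1 : (ball (0:ℂ) 1 : Set ℂ)) : ℂ) / (s : ℂ))
        hsC hfan
      rw [hxa] at hord
      simp only [hTdef, hgdef, hjdef, hord, habsdiv, hxa]
    calc (∑ a ∈ F, T s a) = ∑' x : {x // x ∈ F}, T s x.1 := (Finset.tsum_subtype F (T s)).symm
      _ = ∑' x : {x // x ∈ F}, g (j x) := tsum_congr hTg
      _ ≤ ∑' b : (ball (0:ℂ) 1 : Set ℂ), g b := ENNReal.tsum_comp_le_tsum_of_injective hj g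
      _ ≤ ∫⁻ z in ball (0 : ℂ) 1,
            ENNReal.ofReal ((1 - ‖z‖ ^ 2) ^ (p - 1) * φ ((s : ℂ) * z) *
              logPlus (‖(f ((s : ℂ) * z))‖)) := H s hs0.le hs.2
      _ ≤ _ := by
          refine le_iSup (fun t : (Ioo (1 - δ) 1 : Set ℝ) => ∫⁻ z in ball (0 : ℂ) 1,
            ENNReal.ofReal ((1 - ‖z‖ ^ 2) ^ (p - 1) * φ (((t : ℝ) : ℂ) * z) *
              logPlus (‖(f (((t : ℝ) : ℂ) * z))‖)))
            ⟨s, lt_of_le_of_lt (le_max_left (1 - δ) r) hs.1, hs.2⟩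
  -- limit argument
  have hne : (nhdsWithin (1:ℝ) (Ioo s₀ 1)).NeBot := by
    refine mem_closure_iff_nhdsWithin_neBot.mp ?_
    rw [closure_Ioo hs₀1.ne]
    exact ⟨hs₀1.le, le_refl 1⟩
  have hlim : ∀ a ∈ F, Filter.Tendsto (fun s => T s a) (nhdsWithin (1:ℝ) (Ioo s₀ 1))
      (nhds ((zeroOrder f (a : ℂ) : ℝ≥0∞) *
        ENNReal.ofReal ((1 - ‖(a : ℂ)‖ ^ 2) ^ (p + 1) * φ (a : ℂ)))) := by
    intro a _
    have h1 : Filter.Tendsto (fun s : ℝ => ‖(a : ℂ)‖ / s)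
        (nhdsWithin (1:ℝ) (Ioo s₀ 1)) (nhds (‖(a : ℂ)‖)) := by
      have := (tendsto_const_nhds (x := ‖(a : ℂ)‖)
          (f := nhds (1:ℝ))).div Filter.tendsto_id one_ne_zero
      rw [div_one] at this
      exact this.mono_left nhdsWithin_le_nhds
    have h2 : Filter.Tendsto (fun s : ℝ => (1 - (‖(a : ℂ)‖ / s) ^ 2) ^ (p + 1)
        * φ (a : ℂ)) (nhdsWithin (1:ℝ) (Ioo s₀ 1))
        (nhds ((1 - ‖(a : ℂ)‖ ^ 2) ^ (p + 1) * φ (a : ℂ))) := by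
      refine Filter.Tendsto.mul_const _ ?_
      refine Filter.Tendsto.rpow (tendsto_const_nhds.sub (h1.pow 2)) tendsto_const_nhds
        (Or.inr (by linarith))
    exact ENNReal.Tendsto.const_mul (ENNReal.tendsto_ofReal h2)
      (Or.inr (by simp))
  refine le_of_tendsto (tendsto_finset_sum F hlim) ?_
  filter_upwards [self_mem_nhdsWithin] with s hs using key s hs

end
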